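/- The odd cycle C_{2k+1} (k ≥ 1) with vertices v₀,…,v_{2k} admits the (k+1)-edge-coloring assigning color x_i to edge v_{i−1}v_i for 1 ≤ i ≤ k+1 and color x_{i−k−1} for k+2 ≤ i ≤ 2k+1; this coloring is rainbow and, for every vertex v, there is a rainbow path from v to v₀ avoiding the color x_{k+1}. -/

import Mathlib

open SimpleGraph

def IsRainbowColoring {V α : Type*} (G : SimpleGraph V) (c : Sym2 V → α) : Prop :=
  ∀ u v : V, ∃ p : G.Walk u v, p.IsPath ∧ (p.edges.map c).Nodup

noncomputable def rc {V : Type*} (G : SimpleGraph V) : ℕ :=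
  sInf {t : ℕ | ∃ c : Sym2 V → Fin t, IsRainbowColoring G c}

def IsBlock {V : Type*} (G : SimpleGraph V) (B : Set V) : Prop :=
  ((G.induce B).Connected ∧ ∀ v ∈ B, B ≠ {v} → (G.induce (B \ {v})).Connected) ∧
  ∀ B' : Set V, B ⊆ B' →
    ((G.induce B').Connected ∧ ∀ v ∈ B', B' ≠ {v} → (G.induce (B' \ {v})).Connected) →
    B' = B

def TwoConnected {V : Type*} (G : SimpleGraph V) : Prop :=
  G.Connected ∧ ∀ v : V, (G.induce {u | u ≠ v}).Connected

def TwoEdgeConnected {V : Type*} (G : SimpleGraph V) : Prop :=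
  G.Connected ∧ ∀ e ∈ G.edgeSet, (G.deleteEdges {e}).Connected

def oddCycleColoring (k : ℕ) : Sym2 (Fin (2 * k + 1)) → ℕ :=
  Sym2.lift ⟨fun a b =>
    if min a.val b.val = 0 ∧ max a.val b.val = 2 * k then (2 * k) % (k + 1)
    else (min a.val b.val) % (k + 1),
    by intro a b; simp only [min_comm, max_comm]⟩

namespace OddCycleAux

lemma adj_succ (k j : ℕ) (h : j + 1 ≤ 2*k) :
    (cycleGraph (2*k+1)).Adj ⟨j+1, by omega⟩ ⟨j, by omega⟩ := by
  rw [cycleGraph_adj']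
  left
  simp only [Fin.sub_def]
  have h2 : (2*k+1 - j + (j+1)) = (2*k+1) + 1 := by omega
  rw [h2, Nat.add_mod_left, Nat.mod_eq_of_lt (by omega)]

lemma adj_wrap (k : ℕ) (hk : 1 ≤ k) :
    (cycleGraph (2*k+1)).Adj ⟨2*k, by omega⟩ ⟨0, by omega⟩ := by
  rw [cycleGraph_adj']
  right
  simp only [Fin.sub_def]
  have h2 : (2*k+1 - (2*k) + 0) = 1 := by omega
  rw [h2, Nat.mod_eq_of_lt (by omega)]

lemma color_eval (k : ℕ) (a b : Fin (2*k+1)) :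
    oddCycleColoring k s(a, b) =
      if min a.val b.val = 0 ∧ max a.val b.val = 2 * k then (2 * k) % (k + 1)
      else (min a.val b.val) % (k + 1) := rfl

lemma color_edge (k : ℕ) (hk : 1 ≤ k) (a b : Fin (2*k+1)) (hab : b.val + 1 = a.val)
    (ha : a.val ≤ 2*k) : oddCycleColoring k s(a, b) = b.val % (k+1) := by
  rw [color_eval]
  have hmin : min a.val b.val = b.val := by omega
  have hmax : max a.val b.val = a.val := by omega
  rw [hmin, hmax, if_neg (by omega)]

lemma color_wrap (k : ℕ) (hk : 1 ≤ k) :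
    oddCycleColoring k s((⟨2*k, by omega⟩ : Fin (2*k+1)), ⟨0, by omega⟩) = k - 1 := by
  rw [color_eval]
  rw [if_pos (by simp)]
  have h3 : 2*k = (k-1) + (k+1) := by omega
  rw [h3, Nat.add_mod_right, Nat.mod_eq_of_lt (by omega)]

lemma mod_inj {m x y : ℕ} (hxy : x ≤ y) (h : y - x < m) (he : x % m = y % m) : x = y := by
  have hd : m ∣ y - x := (Nat.modEq_iff_dvd' hxy).mp he
  have := Nat.eq_zero_of_dvd_of_lt hd h
  omega

def downWalk (k a : ℕ) : (d : ℕ) → (h : a + d ≤ 2*k) →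
    (cycleGraph (2*k+1)).Walk ⟨a+d, by omega⟩ ⟨a, by omega⟩
  | 0, _ => Walk.nil
  | d+1, h => Walk.cons (adj_succ k (a+d) (by omega)) (downWalk k a d (by omega))

lemma downWalk_support (k a : ℕ) (d : ℕ) (h : a + d ≤ 2*k) :
    ∀ x ∈ (downWalk k a d h).support, a ≤ x.val ∧ x.val ≤ a + d := by
  induction d with
  | zero =>
    intro x hx
    rw [downWalk] at hx
    simp only [Walk.support_nil, List.mem_singleton] at hx
    subst hx; simp
  | succ d ih =>
    intro x hx
    rw [downWalk, Walk.support_cons, List.mem_cons] at hx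
    rcases hx with hx | hx
    · subst hx; simp only [Fin.val_mk]; omega
    · have := ih (by omega) x hx; omega

lemma downWalk_isPath (k a : ℕ) (d : ℕ) (h : a + d ≤ 2*k) :
    (downWalk k a d h).IsPath := by
  induction d with
  | zero => exact Walk.IsPath.nil
  | succ d ih =>
    rw [downWalk, Walk.cons_isPath_iff]
    refine ⟨ih (by omega), fun hmem => ?_⟩
    have h2 := (downWalk_support k a d (by omega) _ hmem).2
    simp only [Fin.val_mk] at h2
    omega

lemma downWalk_colors_mem (k : ℕ) (hk : 1 ≤ k) (a : ℕ) (d : ℕ) (h : a + d ≤ 2*k) :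
    ∀ x ∈ (downWalk k a d h).edges.map (oddCycleColoring k),
      ∃ j, a ≤ j ∧ j < a + d ∧ x = j % (k+1) := by
  induction d with
  | zero => intro x hx; simp [downWalk] at hx
  | succ d ih =>
    intro x hx
    rw [downWalk, Walk.edges_cons, List.map_cons, List.mem_cons] at hx
    rcases hx with hx | hx
    · refine ⟨a+d, by omega, by omega, ?_⟩
      rw [hx, color_edge k hk _ _ (by simp only [Fin.val_mk]; omega) (by simp only [Fin.val_mk]; omega)]
    · obtain ⟨j, h1, h2, h3⟩ := ih (by omega) x hx
      exact ⟨j, h1, by omega, h3⟩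

lemma downWalk_colors_nodup (k : ℕ) (hk : 1 ≤ k) (a : ℕ) (d : ℕ) (h : a + d ≤ 2*k)
    (hd : d ≤ k + 1) :
    ((downWalk k a d h).edges.map (oddCycleColoring k)).Nodup := by
  induction d with
  | zero => simp [downWalk]
  | succ d ih =>
    rw [downWalk, Walk.edges_cons, List.map_cons, List.nodup_cons]
    refine ⟨fun hmem => ?_, ih (by omega) (by omega)⟩
    rw [color_edge k hk _ _ (by simp only [Fin.val_mk]; omega) (by simp only [Fin.val_mk]; omega)] at hmem
    simp only [Fin.val_mk] at hmem
    obtain ⟨j, h1, h2, h3⟩ := downWalk_colors_mem k hk a d (by omega) _ hmem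
    have : j = a + d := mod_inj (by omega) (by omega) h3.symm
    omega

end OddCycleAux

namespace OddCycleAux2
open OddCycleAux

def seg (k a b : ℕ) (hab : a ≤ b) (hb : b ≤ 2*k) :
    (cycleGraph (2*k+1)).Walk ⟨b, by omega⟩ ⟨a, by omega⟩ :=
  (downWalk k a (b - a) (by omega)).copy (Fin.mk_eq_mk.mpr (by omega)) rfl

lemma seg_support (k a b : ℕ) (hab : a ≤ b) (hb : b ≤ 2*k) :
    ∀ x ∈ (seg k a b hab hb).support, a ≤ x.val ∧ x.val ≤ b := by
  intro x hx
  rw [seg, Walk.support_copy] at hx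
  have := downWalk_support k a (b-a) _ x hx
  omega

lemma seg_isPath (k a b : ℕ) (hab : a ≤ b) (hb : b ≤ 2*k) : (seg k a b hab hb).IsPath := by
  rw [seg, Walk.isPath_copy]; exact downWalk_isPath k a (b-a) _

lemma seg_colors_mem (k : ℕ) (hk : 1 ≤ k) (a b : ℕ) (hab : a ≤ b) (hb : b ≤ 2*k) :
    ∀ x ∈ (seg k a b hab hb).edges.map (oddCycleColoring k),
      ∃ j, a ≤ j ∧ j < b ∧ x = j % (k+1) := by
  intro x hx
  rw [seg, Walk.edges_copy] at hx
  obtain ⟨j, h1, h2, h3⟩ := downWalk_colors_mem k hk a (b-a) _ x hx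
  exact ⟨j, h1, by omega, h3⟩

lemma seg_colors_nodup (k : ℕ) (hk : 1 ≤ k) (a b : ℕ) (hab : a ≤ b) (hb : b ≤ 2*k)
    (hd : b - a ≤ k+1) :
    ((seg k a b hab hb).edges.map (oddCycleColoring k)).Nodup := by
  rw [seg, Walk.edges_copy]
  exact downWalk_colors_nodup k hk a (b-a) _ (by omega)

lemma wrap_exists (k u v : ℕ) (hk : 1 ≤ k) (h1 : u + k + 1 ≤ v) (h2 : v ≤ 2*k) :
    ∃ p : (cycleGraph (2*k+1)).Walk ⟨v, by omega⟩ ⟨u, by omega⟩,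
      p.IsPath ∧ (p.edges.map (oddCycleColoring k)).Nodup ∧
      ∀ e ∈ p.edges, oddCycleColoring k e ≠ k := by
  have hu : u + k + 1 ≤ 2*k := le_trans h1 h2
  refine ⟨((seg k v (2*k) (by omega) (by omega)).reverse.append
      (Walk.cons (adj_wrap k hk) (seg k 0 u (by omega) (by omega)).reverse)), ?_, ?_, ?_⟩
  · rw [Walk.isPath_def, Walk.support_append, Walk.support_cons, List.tail_cons]
    apply List.Nodup.append
    · rw [Walk.support_reverse]
      exact (List.nodup_reverse).mpr (seg_isPath k v (2*k) _ _).support_nodup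
    · rw [Walk.support_reverse]
      exact (List.nodup_reverse).mpr (seg_isPath k 0 u _ _).support_nodup
    · intro x hxp hxq
      rw [Walk.support_reverse, List.mem_reverse] at hxp hxq
      have hA := seg_support k v (2*k) _ _ x hxp
      have hB := seg_support k 0 u _ _ x hxq
      omega
  · rw [Walk.edges_append, Walk.edges_cons, Walk.edges_reverse, Walk.edges_reverse,
      List.map_append, List.map_reverse, List.map_cons, List.map_reverse]
    apply List.Nodup.append
    · exact (List.nodup_reverse).mpr (seg_colors_nodup k hk v (2*k) _ _ (by omega))
    · rw [List.nodup_cons]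
      refine ⟨?_, (List.nodup_reverse).mpr (seg_colors_nodup k hk 0 u _ _ (by omega))⟩
      rw [color_wrap k hk]
      intro hmem
      rw [List.mem_reverse] at hmem
      obtain ⟨j, hj1, hj2, hj3⟩ := seg_colors_mem k hk 0 u _ _ _ hmem
      rw [Nat.mod_eq_of_lt (by omega)] at hj3
      omega
    · intro x hxA hxB
      rw [List.mem_reverse] at hxA
      obtain ⟨j, hj1, hj2, hj3⟩ := seg_colors_mem k hk v (2*k) _ _ _ hxA
      have hx : x = j - (k+1) := by
        rw [hj3, Nat.mod_eq_sub_mod (by omega), Nat.mod_eq_of_lt (by omega)]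
      rw [List.mem_cons] at hxB
      rcases hxB with hxB | hxB
      · rw [color_wrap k hk] at hxB
        omega
      · rw [List.mem_reverse] at hxB
        obtain ⟨j', hj1', hj2', hj3'⟩ := seg_colors_mem k hk 0 u _ _ _ hxB
        rw [Nat.mod_eq_of_lt (by omega)] at hj3'
        omega
  · intro e he
    rw [Walk.edges_append, Walk.edges_cons, Walk.edges_reverse, List.mem_append,
      List.mem_cons] at he
    rcases he with he | he | he
    · rw [List.mem_reverse] at he
      obtain ⟨j, hj1, hj2, hj3⟩ := seg_colors_mem k hk v (2*k) _ _ _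
        (List.mem_map_of_mem (f := oddCycleColoring k) he)
      rw [hj3, Nat.mod_eq_sub_mod (by omega), Nat.mod_eq_of_lt (by omega)]
      omega
    · rw [he, color_wrap k hk]
      omega
    · rw [Walk.edges_reverse, List.mem_reverse] at he
      obtain ⟨j, hj1, hj2, hj3⟩ := seg_colors_mem k hk 0 u _ _ _
        (List.mem_map_of_mem (f := oddCycleColoring k) he)
      rw [hj3, Nat.mod_eq_of_lt (by omega)]
      omega

lemma exists_good (k : ℕ) (hk : 1 ≤ k) (u v : Fin (2*k+1)) (huv : u.val ≤ v.val) :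
    ∃ p : (cycleGraph (2*k+1)).Walk v u,
      p.IsPath ∧ (p.edges.map (oddCycleColoring k)).Nodup := by
  have hv : v.val ≤ 2*k := by omega
  rcases le_or_gt (v.val - u.val) (k+1) with hle | hgt
  · refine ⟨(seg k u.val v.val huv hv).copy (Fin.ext rfl) (Fin.ext rfl), ?_, ?_⟩
    · rw [Walk.isPath_copy]; exact seg_isPath k u.val v.val huv hv
    · rw [Walk.edges_copy]; exact seg_colors_nodup k hk u.val v.val huv hv hle
  · obtain ⟨p, hp1, hp2, _⟩ := wrap_exists k u.val v.val hk (by omega) hv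
    refine ⟨p.copy (Fin.ext rfl) (Fin.ext rfl), ?_, ?_⟩
    · rw [Walk.isPath_copy]; exact hp1
    · rw [Walk.edges_copy]; exact hp2

end OddCycleAux2

theorem odd_cycle_coloring_good (k : ℕ) (hk : 1 ≤ k) :
    IsRainbowColoring (SimpleGraph.cycleGraph (2 * k + 1)) (oddCycleColoring k) ∧
    ∀ v : Fin (2 * k + 1),
      ∃ p : (SimpleGraph.cycleGraph (2 * k + 1)).Walk v 0, p.IsPath ∧
        (p.edges.map (oddCycleColoring k)).Nodup ∧
        ∀ e ∈ p.edges, oddCycleColoring k e ≠ k := by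
  open OddCycleAux OddCycleAux2 in
  constructor
  · intro u v
    rcases le_total u.val v.val with h | h
    · obtain ⟨p, hp1, hp2⟩ := OddCycleAux2.exists_good k hk u v h
      exact ⟨p.reverse, hp1.reverse, by
        rw [Walk.edges_reverse, List.map_reverse]; exact List.nodup_reverse.mpr hp2⟩
    · exact OddCycleAux2.exists_good k hk v u h
  · intro v
    have hv : v.val ≤ 2*k := by omega
    rcases le_or_gt v.val k with hle | hgt
    · refine ⟨(OddCycleAux2.seg k 0 v.val (by omega) hv).copy (Fin.ext rfl)
        (Fin.ext (by simp)), ?_, ?_, ?_⟩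
      · rw [Walk.isPath_copy]; exact OddCycleAux2.seg_isPath k 0 v.val _ _
      · rw [Walk.edges_copy]
        exact OddCycleAux2.seg_colors_nodup k hk 0 v.val _ _ (by omega)
      · intro e he
        rw [Walk.edges_copy] at he
        obtain ⟨j, hj1, hj2, hj3⟩ := OddCycleAux2.seg_colors_mem k hk 0 v.val _ _ _
          (List.mem_map_of_mem (f := oddCycleColoring k) he)
        rw [hj3, Nat.mod_eq_of_lt (by omega)]
        omega
    · obtain ⟨p, hp1, hp2, hp3⟩ := OddCycleAux2.wrap_exists k 0 v.val hk (by omega) hv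
      refine ⟨p.copy (Fin.ext rfl) (Fin.ext (by simp)), ?_, ?_, ?_⟩
      · rw [Walk.isPath_copy]; exact hp1
      · rw [Walk.edges_copy]; exact hp2
      · intro e he; rw [Walk.edges_copy] at he; exact hp3 e he
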